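/- Let C be the category whose objects are the natural numbers and whose morphisms m ⟶ n are all functions Fin(m+1) → Fin(n+1), and let D be the wide subcategory of C with the same objects and only the injective functions, with inclusion functor ι : D ⥤ C. Let H : (Dᵒᵖ ⥤ Type) ⥤ (Cᵒᵖ ⥤ Type) be the left Kan extension along ιᵒᵖ, i.e. the left adjoint of the restriction functor G = (ιᵒᵖ ∘ −). Then the functor H is faithful. -/

import Mathlib

open CategoryTheory Opposite

/-- The category whose objects are the natural numbers and whose morphisms
`m ⟶ n` are all functions `Fin (m+1) → Fin (n+1)`. -/
structure UCat where
  len : ℕ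

instance : Category UCat where
  Hom a b := Fin (a.len + 1) → Fin (b.len + 1)
  id _ := id
  comp f g := g ∘ f

/-- The wide subcategory of `UCat` with only the injective functions. -/
structure UDCat where
  len : ℕ

instance : Category UDCat where
  Hom a b := {f : Fin (a.len + 1) → Fin (b.len + 1) // Function.Injective f}
  id _ := ⟨id, Function.injective_id⟩
  comp f g := ⟨g.1 ∘ f.1, g.2.comp f.2⟩

/-- The inclusion functor. -/
def inclUDC : UDCat ⥤ UCat where
  obj a := ⟨a.len⟩
  map f := f.1

/-- Auxiliary presheaf on `UCat` used to detect equality of maps of `UDCat`-presheaves. -/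
def TT (Y : UDCatᵒᵖ ⥤ Type) (d₀ : UDCatᵒᵖ) : UCatᵒᵖ ⥤ Type where
  obj c := (inclUDC.obj d₀.unop ⟶ c.unop) → Option (Y.obj d₀)
  map {c c'} h := TypeCat.ofHom (fun α g => α (g ≫ h.unop))
  map_id c := by apply ConcreteCategory.hom_ext; intro α; funext g; simp
  map_comp {c c' c''} h h' := by apply ConcreteCategory.hom_ext; intro α; funext g; simp

/-- The natural embedding of `Y` into the restriction of `TT Y d₀`. -/
def tt (Y : UDCatᵒᵖ ⥤ Type) (d₀ : UDCatᵒᵖ) : Y ⟶ inclUDC.op ⋙ TT Y d₀ where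
  app d := TypeCat.ofHom fun y g =>
    if h : Function.Injective g then
      some (Y.map (Quiver.Hom.op (⟨g, h⟩ : d₀.unop ⟶ d.unop)) y)
    else none
  naturality {d d'} v := by
    apply ConcreteCategory.hom_ext; intro y; funext g
    show (if h : Function.Injective g then
        some (Y.map (Quiver.Hom.op (⟨g, h⟩ : d₀.unop ⟶ d'.unop)) (Y.map v y)) else none)
      = (TT Y d₀).map (inclUDC.op.map v) (fun g' =>
        if h : Function.Injective g' then
          some (Y.map (Quiver.Hom.op (⟨g', h⟩ : d₀.unop ⟶ d.unop)) y) else none) g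
    show _ = (if h : Function.Injective (g ≫ (inclUDC.op.map v).unop) then
        some (Y.map (Quiver.Hom.op (⟨g ≫ (inclUDC.op.map v).unop, h⟩ : d₀.unop ⟶ d.unop)) y) else none)
    have hiff : Function.Injective g ↔ Function.Injective (g ≫ (inclUDC.op.map v).unop) := by
      constructor
      · intro h
        exact (v.unop.2).comp h
      · intro h
        exact Function.Injective.of_comp h
    by_cases h : Function.Injective g
    · rw [dif_pos h, dif_pos (hiff.mp h)]
      congr 1
      rw [← FunctorToTypes.map_comp_apply]
      rfl
    · rw [dif_neg h, dif_neg (fun hh => h (hiff.mpr hh))]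

/-- any left adjoint `H` of the restriction functor along `ιᵒᵖ`
(i.e. the left Kan extension along `ιᵒᵖ`) is faithful. -/
theorem stmt12 (H : (UDCatᵒᵖ ⥤ Type) ⥤ (UCatᵒᵖ ⥤ Type))
    (adj : H ⊣ (Functor.whiskeringLeft UDCatᵒᵖ UCatᵒᵖ Type).obj inclUDC.op) :
    H.Faithful := by
  refine ⟨fun {X Y} {f g} hfg => ?_⟩
  have hu : f ≫ adj.unit.app Y = g ≫ adj.unit.app Y := by
    have h1 := adj.unit.naturality f
    have h2 := adj.unit.naturality g
    simp only [Functor.id_map, Functor.comp_map] at h1 h2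
    rw [h1, h2, hfg]
  refine NatTrans.ext (funext fun d => ConcreteCategory.hom_ext _ _ fun x => ?_)
  have key : f ≫ tt Y d = g ≫ tt Y d := by
    have h2 := (adj.homEquiv Y (TT Y d)).apply_symm_apply (tt Y d)
    rw [Adjunction.homEquiv_unit] at h2
    rw [← h2, ← Category.assoc, ← Category.assoc, hu]
  have hpt := ConcreteCategory.congr_hom (NatTrans.congr_app key d) x
  simp only [FunctorToTypes.comp] at hpt
  have hid : Function.Injective (𝟙 (inclUDC.obj d.unop)) := fun _ _ h => h
  have h4 : ∀ y : Y.obj d, (tt Y d).app d y (𝟙 (inclUDC.obj d.unop)) = some y := by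
    intro y
    show (if h : Function.Injective (𝟙 (inclUDC.obj d.unop)) then
        some (Y.map (Quiver.Hom.op ⟨_, h⟩) y) else none) = some y
    rw [dif_pos hid]
    exact congrArg some (FunctorToTypes.map_id_apply Y y)
  have := congrFun hpt (𝟙 (inclUDC.obj d.unop))
  rw [h4, h4] at this
  exact Option.some.inj this
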